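/- Let N ≥ 1, β > 0, q > 0, and let x : [0, ∞) → ℂ^N be differentiable, satisfy x_m'(t) = β·x_m(t) − q·x_m(t)·‖x(t)‖² for each component m and all t ≥ 0, and suppose x(0) ≠ 0. Then ‖x(t)‖² → β/q as t → ∞. -/

import Mathlib

open Filter

/-- If `x : [0, ∞) → ℂ^N` is differentiable, each component satisfies
`x_m' = β·x_m − q·x_m·‖x‖²` with `β, q > 0`, and `x(0) ≠ 0`, then `‖x t‖² → β/q`
as `t → ∞`. -/
theorem norm_sq_tendsto_beta_div_q (N : ℕ) (hN : 1 ≤ N) (β q : ℝ) (hβ : 0 < β)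
    (hq : 0 < q) (x : ℝ → EuclideanSpace ℂ (Fin N))
    (hode : ∀ (m : Fin N), ∀ t ∈ Set.Ici (0 : ℝ),
      HasDerivWithinAt (fun s => x s m)
        ((β : ℂ) * x t m - (q : ℂ) * x t m * ((‖x t‖ ^ 2 : ℝ) : ℂ)) (Set.Ici (0 : ℝ)) t)
    (h0 : x 0 ≠ 0) :
    Tendsto (fun t : ℝ => ‖x t‖ ^ 2) atTop (nhds (β / q)) := by
  set y : ℝ → ℝ := fun t => ‖x t‖ ^ 2 with hy_def
  have hcell : ∀ s : ℝ, y s = ∑ m : Fin N, Complex.normSq (x s m) := by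
    intro s
    simp only [hy_def]
    rw [EuclideanSpace.norm_eq, Real.sq_sqrt (by positivity)]
    refine Finset.sum_congr rfl fun m _ => ?_
    rw [Complex.sq_norm]
  have hynn : ∀ s : ℝ, 0 ≤ y s := fun s => by positivity
  have hyderiv : ∀ t ∈ Set.Ici (0 : ℝ),
      HasDerivWithinAt y (2 * (β - q * y t) * y t) (Set.Ici 0) t := by
    intro t ht
    have hterm : ∀ m : Fin N, HasDerivWithinAt (fun s => Complex.normSq (x s m))
        (2 * (β - q * y t) * Complex.normSq (x t m)) (Set.Ici 0) t := by
      intro m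
      set c : ℂ := (β : ℂ) - (q : ℂ) * ((y t : ℝ) : ℂ) with hc_def
      have h : HasDerivWithinAt (fun s => x s m) (c * x t m) (Set.Ici 0) t := by
        convert hode m t ht using 1
        simp only [hc_def, hy_def]
        ring
      have hre : HasDerivWithinAt (fun s => (x s m).re) ((c * x t m).re) (Set.Ici 0) t :=
        Complex.reCLM.hasFDerivAt.comp_hasDerivWithinAt t h
      have him : HasDerivWithinAt (fun s => (x s m).im) ((c * x t m).im) (Set.Ici 0) t :=
        Complex.imCLM.hasFDerivAt.comp_hasDerivWithinAt t h
      have hcombo := (hre.fun_mul hre).fun_add (him.fun_mul him)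
      have hfun : (fun s => (x s m).re * (x s m).re + (x s m).im * (x s m).im)
          = fun s => Complex.normSq (x s m) := by
        funext s; rw [Complex.normSq_apply]
      rw [hfun] at hcombo
      refine hcombo.congr_deriv ?_
      have hcre : c.re = β - q * y t := by simp [hc_def]
      have hcim : c.im = 0 := by simp [hc_def]
      simp only [Complex.normSq_apply, Complex.mul_re, Complex.mul_im, hcre, hcim]
      ring
    have hsum := HasDerivWithinAt.fun_sum (fun m (_ : m ∈ Finset.univ) => hterm m)
    have hfun : (fun s => ∑ m : Fin N, Complex.normSq (x s m)) = y := by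
      funext s; exact (hcell s).symm
    rw [hfun] at hsum
    refine hsum.congr_deriv ?_
    rw [← Finset.mul_sum, ← hcell t]
  have hycont : ContinuousOn y (Set.Ici 0) := fun t ht =>
    (hyderiv t ht).continuousWithinAt
  have hy0 : 0 < y 0 := by
    simp only [hy_def]
    have : 0 < ‖x 0‖ := norm_pos_iff.2 h0
    positivity
  -- positivity of y
  have hypos : ∀ t ∈ Set.Ici (0 : ℝ), 0 < y t := by
    intro T hT
    have hT0 : (0 : ℝ) ≤ T := hT
    have hIcc : Set.Icc (0 : ℝ) T ⊆ Set.Ici 0 := fun s hs => hs.1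
    have hne : (Set.Icc (0 : ℝ) T).Nonempty := ⟨0, by simp [hT0]⟩
    obtain ⟨tm, htm, htmax⟩ := (isCompact_Icc (a := (0:ℝ)) (b := T)).exists_isMaxOn hne
      (hycont.mono hIcc)
    set M : ℝ := y tm with hM_def
    have hMbound : ∀ s ∈ Set.Icc (0 : ℝ) T, y s ≤ M := fun s hs => htmax hs
    set K : ℝ := 2 * q * M with hK_def
    set g : ℝ → ℝ := fun s => y s * Real.exp (K * s) with hg_def
    have hgmono : MonotoneOn g (Set.Icc (0 : ℝ) T) := by
      apply monotoneOn_of_hasDerivWithinAt_nonneg (convex_Icc 0 T)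
        (f' := fun s => 2 * (β - q * y s) * y s * Real.exp (K * s)
          + y s * (Real.exp (K * s) * K))
      · exact ((hycont.mono hIcc).mul (Real.continuous_exp.comp
          (continuous_const.mul continuous_id)).continuousOn)
      · intro s hs
        rw [interior_Icc] at hs
        have hs0 : s ∈ Set.Ici (0 : ℝ) := le_of_lt hs.1
        have hysub : Set.Ioo (0 : ℝ) T ⊆ Set.Ici 0 := fun a ha => le_of_lt ha.1
        have hexp : HasDerivWithinAt (fun s => Real.exp (K * s))
            (Real.exp (K * s) * K) (Set.Ioo (0:ℝ) T) s := by
          have := ((hasDerivAt_id s).const_mul K).exp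
          simpa using this.hasDerivWithinAt
        rw [interior_Icc]
        exact ((hyderiv s hs0).mono hysub).mul hexp
      · intro s hs
        rw [interior_Icc] at hs
        have hsIcc : s ∈ Set.Icc (0 : ℝ) T := ⟨le_of_lt hs.1, le_of_lt hs.2⟩
        have h1 : y s ≤ M := hMbound s hsIcc
        have h2 : 0 ≤ y s := hynn s
        have h3 : 0 < Real.exp (K * s) := Real.exp_pos _
        have : 2 * (β - q * y s) * y s + y s * K ≥ 0 := by
          rw [hK_def]
          nlinarith [mul_nonneg (mul_nonneg hq.le h2) (sub_nonneg.2 h1),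
            mul_nonneg hβ.le h2]
        calc (0:ℝ) ≤ (2 * (β - q * y s) * y s + y s * K) * Real.exp (K * s) := by positivity
          _ = 2 * (β - q * y s) * y s * Real.exp (K * s) + y s * (Real.exp (K * s) * K) := by
              ring
    have hkey : g 0 ≤ g T := hgmono ⟨le_refl 0, hT0⟩ ⟨hT0, le_refl T⟩ hT0
    have hg0 : g 0 = y 0 := by simp [hg_def]
    have hgT : g T = y T * Real.exp (K * T) := rfl
    rw [hg0, hgT] at hkey
    nlinarith [Real.exp_pos (K * T), hy0, hynn T]
  -- the auxiliary function u = β / y - q satisfies u' = -2β u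
  set u : ℝ → ℝ := fun t => β / y t - q with hu_def
  have huderiv : ∀ t ∈ Set.Ici (0 : ℝ),
      HasDerivWithinAt u (-(2 * β) * u t) (Set.Ici 0) t := by
    intro t ht
    have hy0' : y t ≠ 0 := ne_of_gt (hypos t ht)
    have hinv := ((hyderiv t ht).fun_inv hy0').const_mul β
    have := hinv.sub_const q
    have heq : β * (-(2 * (β - q * y t) * y t) / y t ^ 2) = -(2 * β) * u t := by
      show _ = -(2 * β) * (β / y t - q)
      field_simp
    rw [heq] at this
    have hfun : (fun s => β * (y s)⁻¹ - q) = u := by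
      funext s; simp [hu_def, div_eq_mul_inv]
    rwa [hfun] at this
  -- solve the linear ODE: u t * exp (2β t) is constant
  have hucont : ContinuousOn u (Set.Ici 0) := fun t ht => (huderiv t ht).continuousWithinAt
  have hconst : ∀ t ∈ Set.Ici (0 : ℝ), u t * Real.exp (2 * β * t) = u 0 := by
    intro t ht
    have key := constant_of_has_deriv_right_zero
      (f := fun s => u s * Real.exp (2 * β * s)) (a := 0) (b := t)
      (hcont := ((hucont.mono (fun s hs => hs.1)).mul (Real.continuous_exp.comp
        (continuous_const.mul continuous_id)).continuousOn))
      (hderiv := ?_) t ⟨ht, le_refl t⟩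
    · simpa using key
    · intro s hs
      have hs0 : s ∈ Set.Ici (0 : ℝ) := hs.1
      have hsub : Set.Ici s ⊆ Set.Ici 0 := Set.Ici_subset_Ici.2 hs.1
      have hexp : HasDerivWithinAt (fun s => Real.exp (2 * β * s))
          (Real.exp (2 * β * s) * (2 * β)) (Set.Ici s) s := by
        have := ((hasDerivAt_id s).const_mul (2 * β)).exp
        simpa using this.hasDerivWithinAt
      have := ((huderiv s hs0).mono hsub).fun_mul hexp
      refine this.congr_deriv ?_
      ring
  -- explicit formula for y
  have hformula : ∀ t ∈ Set.Ici (0 : ℝ),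
      y t = β / (q + u 0 * Real.exp (-(2 * β) * t)) := by
    intro t ht
    have hyt : 0 < y t := hypos t ht
    have hut : u 0 * Real.exp (-(2 * β) * t) = u t := by
      rw [← hconst t ht]
      rw [mul_assoc, ← Real.exp_add]
      ring_nf
      simp
    rw [hut]
    have : q + u t = β / y t := by simp [hu_def]
    rw [this]
    field_simp
  -- take the limit
  have hexp0 : Tendsto (fun t : ℝ => Real.exp (-(2 * β) * t)) atTop (nhds 0) := by
    apply Real.tendsto_exp_atBot.comp
    apply Filter.Tendsto.const_mul_atTop_of_neg (by linarith : -(2 * β) < 0) tendsto_id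
  have hden : Tendsto (fun t : ℝ => q + u 0 * Real.exp (-(2 * β) * t)) atTop (nhds q) := by
    have := (tendsto_const_nhds (x := u 0)).mul hexp0
    have h2 := (tendsto_const_nhds (x := q) (f := atTop (α := ℝ))).add this
    simpa using h2
  have hlim : Tendsto (fun t : ℝ => β / (q + u 0 * Real.exp (-(2 * β) * t)))
      atTop (nhds (β / q)) :=
    tendsto_const_nhds.div hden (ne_of_gt hq)
  refine hlim.congr' ?_
  filter_upwards [eventually_ge_atTop (0 : ℝ)] with t ht
  exact (hformula t ht).symm
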